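/- Let α ∈ (0,1] and let a,b be positive integers such that for every point (v',v_d) in the truncated open α-cusp Γ = Γ_d^α(r,h) and every t with 0 < |t| ≤ 1, the point (t^a v', t^b v_d) lies in Γ. Then b is a positive even integer and a·α ≥ b; in particular a ≥ ⌈2/α⌉ = p(α). -/

import Mathlib

/-- If `a, b` are positive integers such that `(t^a v', t^b v_d)` stays in the
truncated open `α`-cusp `Γ = Γ_d^α(r,h)` for every `(v',v_d) ∈ Γ` and every `0 < |t| ≤ 1`,
then `b` is even and `a·α ≥ b`; in particular `a ≥ ⌈2/α⌉ = p(α)`. -/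
theorem stmt1 (e : ℕ) (he : 1 ≤ e) (α r h : ℝ) (hα0 : 0 < α) (hα1 : α ≤ 1)
    (hr : 0 < r) (hh : 0 < h) (a b : ℕ) (ha : 0 < a) (hb : 0 < b)
    (H : ∀ (v' : EuclideanSpace ℝ (Fin e)) (vd : ℝ),
      ‖v'‖ < r → h * (‖v'‖ / r) ^ α < vd → vd < h →
      ∀ t : ℝ, 0 < |t| → |t| ≤ 1 →
        ‖t ^ a • v'‖ < r ∧ h * (‖t ^ a • v'‖ / r) ^ α < t ^ b * vd ∧ t ^ b * vd < h) :
    Even b ∧ (b : ℝ) ≤ (a : ℝ) * α ∧ ⌈2 / α⌉₊ ≤ a := by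
  -- Part 1: b is even
  have heb : Even b := by
    by_contra hodd
    have hob : Odd b := Nat.odd_iff.mpr (Nat.not_even_iff.mp hodd)
    have h1 := H 0 (h / 2) (by simpa using hr)
      (by simp [Real.zero_rpow hα0.ne']; linarith) (by linarith) (-1)
      (by norm_num) (by norm_num)
    obtain ⟨-, h2, -⟩ := h1
    rw [hob.neg_one_pow] at h2
    have hz : h * (‖(-1 : ℝ) ^ a • (0 : EuclideanSpace ℝ (Fin e))‖ / r) ^ α = 0 := by
      simp [Real.zero_rpow hα0.ne']
    rw [hz] at h2
    linarith
  -- Part 2: b ≤ a * α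
  have hkey : (b : ℝ) ≤ (a : ℝ) * α := by
    by_contra hlt
    push_neg at hlt
    set t : ℝ := 1 / 2 with htdef
    have ht0 : (0 : ℝ) < t := by norm_num
    have ht1 : t < 1 := by norm_num
    have hlt2 : t ^ ((b : ℝ)) < t ^ ((a : ℝ) * α) :=
      Real.rpow_lt_rpow_of_exponent_gt ht0 ht1 hlt
    set A := h * t ^ α with hA
    have hApos : 0 < A := mul_pos hh (Real.rpow_pos_of_pos ht0 α)
    have hAh : A < h := by
      have h1 : t ^ α < 1 := Real.rpow_lt_one ht0.le ht1 hα0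
      nlinarith
    have htb : (0 : ℝ) < t ^ ((b : ℝ)) := Real.rpow_pos_of_pos ht0 _
    have htaα : (0 : ℝ) < t ^ ((a : ℝ) * α) := Real.rpow_pos_of_pos ht0 _
    set c := t ^ ((a : ℝ) * α) / t ^ ((b : ℝ)) with hc
    have hc1 : 1 < c := (one_lt_div htb).mpr hlt2
    set vd := min (A * c) ((A + h) / 2) with hvd
    have hv1 : A < vd := lt_min (by nlinarith) (by linarith)
    have hv2 : vd < h := lt_of_le_of_lt (min_le_right _ _) (by linarith)
    have hnorm : ‖EuclideanSpace.single (⟨0, he⟩ : Fin e) (r / 2)‖ = r / 2 := by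
      rw [EuclideanSpace.norm_single, Real.norm_eq_abs, abs_of_pos (by linarith)]
    have harg1 : ‖EuclideanSpace.single (⟨0, he⟩ : Fin e) (r / 2)‖ < r := by
      rw [hnorm]; linarith
    have harg2 : h * (‖EuclideanSpace.single (⟨0, he⟩ : Fin e) (r / 2)‖ / r) ^ α < vd := by
      rw [hnorm]
      have : r / 2 / r = t := by field_simp [htdef]; ring
      rw [this]
      exact hv1
    obtain ⟨-, h2, -⟩ := H _ vd harg1 harg2 hv2 t
      (by rw [abs_of_pos ht0]; exact ht0) (by rw [abs_of_pos ht0]; linarith)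
    have hns : ‖t ^ a • EuclideanSpace.single (⟨0, he⟩ : Fin e) (r / 2)‖ = t ^ a * (r / 2) := by
      rw [norm_smul, hnorm, norm_pow, Real.norm_eq_abs, abs_of_pos ht0]
    rw [hns] at h2
    have hdiv : t ^ a * (r / 2) / r = t ^ a * t := by
      field_simp [htdef]; ring
    rw [hdiv] at h2
    have hmul : (t ^ a * t) ^ α = t ^ ((a : ℝ) * α) * t ^ α := by
      rw [Real.mul_rpow (pow_nonneg ht0.le _) ht0.le, ← Real.rpow_natCast t a,
        ← Real.rpow_mul ht0.le]
    rw [hmul] at h2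
    have htbn : (t : ℝ) ^ b = t ^ ((b : ℝ)) := (Real.rpow_natCast t b).symm
    have hle : t ^ b * vd ≤ t ^ ((a : ℝ) * α) * A := by
      calc t ^ b * vd ≤ t ^ b * (A * c) := by
            apply mul_le_mul_of_nonneg_left (min_le_left _ _) (by positivity)
        _ = t ^ ((a : ℝ) * α) * A := by
            rw [htbn, hc]; field_simp
    have heq : h * (t ^ ((a : ℝ) * α) * t ^ α) = t ^ ((a : ℝ) * α) * A := by
      rw [hA]; ring
    rw [heq] at h2
    linarith
  refine ⟨heb, hkey, ?_⟩
  have hb2 : 2 ≤ b := by obtain ⟨k, hk⟩ := heb; omega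
  rw [Nat.ceil_le, div_le_iff₀ hα0]
  calc (2 : ℝ) ≤ (b : ℝ) := by exact_mod_cast hb2
    _ ≤ (a : ℝ) * α := hkey
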